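/- Suppose r is even. Then for each sign ε ∈ {+1,−1} the following hold in Cl ⊗ Cl: p_{ε,−ε}·Π_{m=1}^{r/2} ( Ĉ − c_{2m−1}·(1⊗1) ) = 0, and p_{εε}·Π_{m=0}^{r/2} ( Ĉ − c_{2m}·(1⊗1) ) = 0, where c_k := (2k(2r−k) − r(2r−1))/(16(r−1)). -/

import Mathlib

open scoped TensorProduct

noncomputable section

/-- The quadratic form `x₁² + ⋯ + x_{2r}²` on `ℂ^{2r}`. -/
def Qf (r : ℕ) : QuadraticForm ℂ (Fin (2*r) → ℂ) :=
  QuadraticMap.weightedSumSquares ℂ (fun _ : Fin (2*r) => (1:ℂ))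

/-- The Clifford algebra of `Qf r`. -/
abbrev Cl (r : ℕ) := CliffordAlgebra (Qf r)

/-- The generators `Γ_i`. -/
def Γgen (r : ℕ) (i : Fin (2*r)) : Cl r :=
  CliffordAlgebra.ι (Qf r) (Pi.single i 1)

/-- The antisymmetrised products `Γ_{[i₁…i_k]}`. -/
def Γbr (r k : ℕ) (i : Fin k → Fin (2*r)) : Cl r :=
  ((k.factorial : ℂ))⁻¹ •
    ∑ σ : Equiv.Perm (Fin k),
      ((Equiv.Perm.sign σ : ℤ) : ℂ) • (List.ofFn fun j => Γgen r (i (σ j))).prod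

/-- The invariants `I_k ∈ Cl ⊗ Cl`. -/
def Ik (r k : ℕ) : Cl r ⊗[ℂ] Cl r :=
  ∑ i : Fin k → Fin (2*r), (Γbr r k i) ⊗ₜ[ℂ] (Γbr r k i)

/-- The split Casimir element `Ĉ = −I₂/(16(2r−2))`. -/
def sC (r : ℕ) : Cl r ⊗[ℂ] Cl r := (-(16*(2*(r:ℂ)-2))⁻¹) • Ik r 2

/-- The top element `Γ_{2r+1} = (−i)^r Γ₁⋯Γ_{2r}`. -/
def Γtop (r : ℕ) : Cl r :=
  ((-Complex.I)^r) • (List.ofFn fun i : Fin (2*r) => Γgen r i).prod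

/-- The chirality projector `p_ε = (1 + ε Γ_{2r+1})/2`. -/
def pCh (r : ℕ) (ε : ℂ) : Cl r := (2:ℂ)⁻¹ • (1 + ε • Γtop r)

/-- The chirality projectors `p_{εε'} = p_ε ⊗ p_{ε'}`. -/
def ppCh (r : ℕ) (ε ε' : ℂ) : Cl r ⊗[ℂ] Cl r := (pCh r ε) ⊗ₜ[ℂ] (pCh r ε')

/-- The eigenvalues `c_k = (2k(2r−k) − r(2r−1))/(16(r−1))`. -/
def cEv (r k : ℕ) : ℂ :=
  (2*(k:ℂ)*(2*(r:ℂ)-(k:ℂ)) - (r:ℂ)*(2*(r:ℂ)-1)) / (16*((r:ℂ)-1))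

/-- The spectral projectors `P_k = Π_{j≠k} (Ĉ − c_j)/(c_k − c_j)`. -/
def Pk (r k : ℕ) : Cl r ⊗[ℂ] Cl r :=
  (((List.range (r+1)).filter (fun j => j ≠ k)).map
    (fun j => (cEv r k - cEv r j)⁻¹ • (sC r - cEv r j • 1))).prod

/-- `P_r^S = (p_{++} + p_{−−})·P_r`. -/
def PrS (r : ℕ) : Cl r ⊗[ℂ] Cl r := (ppCh r 1 1 + ppCh r (-1) (-1)) * Pk r r

/-- The ascending factorial `a_k(u) = (u/2)(u/2+1)⋯(u/2+k−1)`. -/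
def asc (u : ℂ) (k : ℕ) : ℂ := ∏ j ∈ Finset.range k, (u/2 + (j:ℂ))

namespace Aux
variable {r : ℕ}

lemma gamma_sq (i : Fin (2*r)) : Γgen r i * Γgen r i = 1 := by
  rw [Γgen, CliffordAlgebra.ι_sq_scalar]
  have : Qf r (Pi.single i 1) = 1 := by
    simp [Qf, QuadraticMap.weightedSumSquares_apply, Pi.single_apply]
  rw [this, map_one]

lemma gamma_anticomm {i j : Fin (2*r)} (h : i ≠ j) :
    Γgen r i * Γgen r j = - (Γgen r j * Γgen r i) := by
  have h2 : Γgen r i * Γgen r j + Γgen r j * Γgen r i = 0 := by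
    simp only [Γgen]
    rw [CliffordAlgebra.ι_mul_ι_add_swap]
    have : QuadraticMap.polar (Qf r) (Pi.single i 1) (Pi.single j 1) = 0 := by
      simp [QuadraticMap.polar, Qf, QuadraticMap.weightedSumSquares_apply,
        Pi.single_apply, h, Ne.symm h]
      have hx : ∀ x : Fin (2*r),
          ((if x = i then (1:ℂ) else 0) + if x = j then 1 else 0) *
            ((if x = i then 1 else 0) + if x = j then 1 else 0)
          = (if x = i then 1 else 0) + (if x = j then 1 else 0) := by
        intro x
        by_cases hi : x = i <;> by_cases hj : x = j <;> simp_all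
      simp only [hx, Finset.sum_add_distrib, Finset.sum_ite_eq' Finset.univ,
        Finset.mem_univ, if_true]
      ring
    rw [this, map_zero]
  exact eq_neg_of_add_eq_zero_left h2


/-- flip one coordinate -/
def flip1 (i : Fin (2*r)) (x : Fin (2*r) → Bool) : Fin (2*r) → Bool :=
  Function.update x i (!x i)

lemma flip1_apply (i : Fin (2*r)) (x) (j) :
    flip1 i x j = if j = i then !x j else x j := by
  by_cases h : j = i <;> simp [flip1, Function.update, h]

lemma flip1_flip1 (i : Fin (2*r)) (x) : flip1 i (flip1 i x) = x := by
  funext j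
  by_cases h : j = i <;> simp [flip1_apply, h]

def γl (l : List (Fin (2*r))) (x : Fin (2*r) → Bool) : Cl r :=
  ((l.filter (fun i => x i)).map (Γgen r)).prod

lemma γl_nil (x) : γl ([] : List (Fin (2*r))) x = 1 := rfl

lemma gamma_mul_γl (l : List (Fin (2*r))) (hl : l.Nodup) (i : Fin (2*r)) (hi : i ∈ l)
    (x : Fin (2*r) → Bool) :
    ∃ c : ℂ, (c = 1 ∨ c = -1) ∧ Γgen r i * γl l x = c • γl l (flip1 i x) := by
  induction l with
  | nil => simp at hi
  | cons a l ih =>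
    rw [List.nodup_cons] at hl
    obtain ⟨ha, hl⟩ := hl
    by_cases hia : i = a
    · subst hia
      have hfl : l.filter (fun j => flip1 i x j) = l.filter (fun j => x j) := by
        apply List.filter_congr
        intro j hj
        have : j ≠ i := fun h => ha (h ▸ hj)
        simp [flip1_apply, this]
      by_cases hx : x i = true
      · refine ⟨1, Or.inl rfl, ?_⟩
        have h1 : γl (i :: l) x = Γgen r i * γl l x := by
          simp [γl, List.filter_cons, hx]
        have h2 : γl (i :: l) (flip1 i x) = γl l x := by
          simp only [γl, List.filter_cons]
          have : flip1 i x i = false := by simp [flip1_apply, hx]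
          simp [this, hfl]
        rw [h1, h2, ← mul_assoc, gamma_sq, one_mul, one_smul]
      · refine ⟨1, Or.inl rfl, ?_⟩
        have hx' : x i = false := by simpa using hx
        have h1 : γl (i :: l) x = γl l x := by
          simp only [γl, List.filter_cons]
          simp [hx']
        have h2 : γl (i :: l) (flip1 i x) = Γgen r i * γl l x := by
          simp only [γl, List.filter_cons]
          have : flip1 i x i = true := by simp [flip1_apply, hx']
          simp [this, hfl, γl]
        rw [h1, h2, one_smul]
    · have hil : i ∈ l := by
        rcases List.mem_cons.mp hi with h | h
        · exact absurd h hia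
        · exact h
      obtain ⟨c, hc, hmul⟩ := ih hl hil
      have hfa : flip1 i x a = x a := by
        have : ¬ a = i := fun h => hia h.symm
        simp [flip1_apply, this]
      by_cases hxa : x a = true
      · refine ⟨-c, by rcases hc with h | h <;> simp [h], ?_⟩
        have h1 : γl (a :: l) x = Γgen r a * γl l x := by
          simp [γl, List.filter_cons, hxa]
        have h2 : γl (a :: l) (flip1 i x) = Γgen r a * γl l (flip1 i x) := by
          simp only [γl, List.filter_cons]
          simp [hfa, hxa]
        rw [h1, h2, ← mul_assoc, gamma_anticomm hia, neg_mul, mul_assoc, hmul,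
          mul_smul_comm, neg_smul]
      · refine ⟨c, hc, ?_⟩
        have hxa' : x a = false := by simpa using hxa
        have h1 : γl (a :: l) x = γl l x := by simp [γl, List.filter_cons, hxa']
        have h2 : γl (a :: l) (flip1 i x) = γl l (flip1 i x) := by
          simp [γl, List.filter_cons, hfa, hxa']
        rw [h1, h2, hmul]


-- NEW CHUNK
def γb (x : Fin (2*r) → Bool) : Cl r := γl (List.finRange (2*r)) x

lemma γb_bot : γb (fun _ : Fin (2*r) => false) = 1 := by
  simp [γb, γl]

lemma gamma_mul_γb (i : Fin (2*r)) (x) :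
    ∃ c : ℂ, (c = 1 ∨ c = -1) ∧ Γgen r i * γb x = c • γb (flip1 i x) :=
  gamma_mul_γl _ (List.nodup_finRange _) i (List.mem_finRange i) x

lemma prod_mul_γb (l : List (Fin (2*r))) (x) :
    ∃ c : ℂ, (c = 1 ∨ c = -1) ∧
      (l.map (Γgen r)).prod * γb x = c • γb (l.foldr flip1 x) := by
  induction l with
  | nil => exact ⟨1, Or.inl rfl, by simp⟩
  | cons a l ih =>
    obtain ⟨c, hc, hmul⟩ := ih
    obtain ⟨c', hc', hmul'⟩ := gamma_mul_γb a (l.foldr flip1 x)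
    refine ⟨c * c', by rcases hc with h|h <;> rcases hc' with h'|h' <;> simp [h, h'], ?_⟩
    rw [List.map_cons, List.prod_cons, mul_assoc, hmul, mul_smul_comm, hmul',
      List.foldr_cons, smul_smul]

lemma foldr_flip1_apply (l : List (Fin (2*r))) (hl : l.Nodup) (x) (j) :
    (l.foldr flip1 x) j = if j ∈ l then !x j else x j := by
  induction l with
  | nil => simp
  | cons a l ih =>
    rw [List.nodup_cons] at hl
    obtain ⟨ha, hl⟩ := hl
    rw [List.foldr_cons, flip1_apply]
    by_cases hja : j = a
    · subst hja
      simp [ih hl, ha]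
    · simp [hja, ih hl, List.mem_cons]

lemma foldr_flip1_finRange (x : Fin (2*r) → Bool) :
    (List.finRange (2*r)).foldr flip1 x = fun j => !x j := by
  funext j
  rw [foldr_flip1_apply _ (List.nodup_finRange _)]
  simp [List.mem_finRange]

lemma prod_gamma_comm (l : List (Fin (2*r))) (a : Fin (2*r)) (ha : a ∉ l) :
    (l.map (Γgen r)).prod * Γgen r a
      = ((-1:ℂ))^l.length • (Γgen r a * (l.map (Γgen r)).prod) := by
  induction l with
  | nil => simp
  | cons b l ih =>
    have hba : b ≠ a := fun h => ha (h ▸ (List.mem_cons.mpr (Or.inl rfl) : b ∈ b :: l))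
    have hal : a ∉ l := fun h => ha (List.mem_cons_of_mem _ h)
    rw [List.map_cons, List.prod_cons, mul_assoc, ih hal, mul_smul_comm,
      ← mul_assoc, gamma_anticomm hba, neg_mul, mul_assoc, smul_neg,
      List.length_cons, pow_succ, mul_comm (((-1:ℂ))^l.length) (-1), mul_smul,
      neg_one_smul]

lemma prod_gamma_sq (l : List (Fin (2*r))) (hl : l.Nodup) :
    (l.map (Γgen r)).prod * (l.map (Γgen r)).prod
      = ((-1:ℂ))^(l.length*(l.length-1)/2) • 1 := by
  induction l with
  | nil => simp
  | cons a l ih =>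
    rw [List.nodup_cons] at hl
    obtain ⟨ha, hl⟩ := hl
    set P := (List.map (Γgen r) l).prod with hP
    have h1 : (Γgen r a * P) * (Γgen r a * P) = Γgen r a * ((P * Γgen r a) * P) := by
      noncomm_ring
    have h2 : Γgen r a * (Γgen r a * P * P) = (Γgen r a * Γgen r a) * (P * P) := by
      noncomm_ring
    rw [List.map_cons, List.prod_cons, h1, prod_gamma_comm l a ha, smul_mul_assoc,
      mul_smul_comm, ← hP, h2, gamma_sq, one_mul, ih hl, smul_smul, ← pow_add]
    congr 2
    simp only [List.length_cons]
    rw [← Nat.choose_two_right, ← Nat.choose_two_right, Nat.choose_succ_succ,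
      Nat.choose_one_right]

-- CHUNK 4
def Eg (x : Fin (2*r) → Bool) : Cl r ⊗[ℂ] Cl r := γb x ⊗ₜ[ℂ] γb x

def Fop (r : ℕ) : Cl r ⊗[ℂ] Cl r := ∑ i : Fin (2*r), Γgen r i ⊗ₜ[ℂ] Γgen r i

def Topel (r : ℕ) : Cl r ⊗[ℂ] Cl r :=
  γb (fun _ : Fin (2*r) => true) ⊗ₜ[ℂ] γb (fun _ : Fin (2*r) => true)

lemma sq_tmul_mul {a b : Cl r} (c : ℂ) (hc : c = 1 ∨ c = -1) (h : a = c • b) :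
    a ⊗ₜ[ℂ] a = b ⊗ₜ[ℂ] b := by
  rw [h, TensorProduct.smul_tmul_smul]
  rcases hc with h' | h' <;> simp [h']

lemma gam_tmul_mul_Eg (i : Fin (2*r)) (x) :
    (Γgen r i ⊗ₜ[ℂ] Γgen r i) * Eg x = Eg (flip1 i x) := by
  obtain ⟨c, hc, h⟩ := gamma_mul_γb i x
  rw [Eg, Eg, Algebra.TensorProduct.tmul_mul_tmul]
  exact sq_tmul_mul c hc h

lemma Topel_mul_Eg (x : Fin (2*r) → Bool) :
    Topel r * Eg x = Eg (fun j => !x j) := by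
  obtain ⟨c, hc, h⟩ := prod_mul_γb (List.finRange (2*r)) x
  rw [foldr_flip1_finRange] at h
  have htop : γb (fun _ : Fin (2*r) => true) = ((List.finRange (2*r)).map (Γgen r)).prod := by
    simp [γb, γl]
  rw [Topel, Eg, Eg, Algebra.TensorProduct.tmul_mul_tmul, htop]
  exact sq_tmul_mul c hc h

def Phi (r : ℕ) (f : (Fin (2*r) → Bool) → ℂ) : Cl r ⊗[ℂ] Cl r :=
  ∑ x : Fin (2*r) → Bool, f x • Eg x

def Aop (r : ℕ) (f : (Fin (2*r) → Bool) → ℂ) : (Fin (2*r) → Bool) → ℂ :=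
  fun x => ∑ i : Fin (2*r), f (flip1 i x)

def δv (r : ℕ) (y : Fin (2*r) → Bool) : (Fin (2*r) → Bool) → ℂ :=
  fun x => if x = y then 1 else 0

lemma Phi_δv (y : Fin (2*r) → Bool) : Phi r (δv r y) = Eg y := by
  rw [Phi]
  rw [Finset.sum_eq_single y]
  · simp [δv]
  · intro b _ hb; simp [δv, hb]
  · intro h; exact absurd (Finset.mem_univ y) h

lemma Phi_bot : Phi r (δv r (fun _ => false)) = 1 := by
  rw [Phi_δv, Eg, γb_bot, Algebra.TensorProduct.one_def]

def flipPerm (i : Fin (2*r)) : Equiv.Perm (Fin (2*r) → Bool) :=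
  Function.Involutive.toPerm (flip1 i) (flip1_flip1 i)

lemma Fop_mul_Phi (f) : Fop r * Phi r f = Phi r (Aop r f) := by
  rw [Fop, Phi, Finset.sum_mul]
  have h1 : ∀ i : Fin (2*r),
      (Γgen r i ⊗ₜ[ℂ] Γgen r i) * ∑ x, f x • Eg x = ∑ x, f (flip1 i x) • Eg x := by
    intro i
    rw [Finset.mul_sum]
    have : ∀ x, (Γgen r i ⊗ₜ[ℂ] Γgen r i) * (f x • Eg x) = f x • Eg (flip1 i x) := by
      intro x; rw [mul_smul_comm, gam_tmul_mul_Eg]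
    rw [Finset.sum_congr rfl (fun x _ => this x)]
    exact Fintype.sum_equiv (flipPerm i) _ _
      (fun x => by simp [flipPerm, Function.Involutive.toPerm, flip1_flip1])
  rw [Finset.sum_congr rfl (fun i _ => h1 i), Finset.sum_comm, Phi]
  exact Finset.sum_congr rfl (fun x _ => by rw [Aop, Finset.sum_smul])

def notc (x : Fin (2*r) → Bool) : Fin (2*r) → Bool := fun j => !x j

lemma notc_notc (x : Fin (2*r) → Bool) : notc (notc x) = x := by
  funext j; simp [notc]

def notPerm : Equiv.Perm (Fin (2*r) → Bool) :=
  Function.Involutive.toPerm notc notc_notc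

lemma Topel_mul_Phi (f) : Topel r * Phi r f = Phi r (fun x => f (notc x)) := by
  rw [Phi, Finset.mul_sum]
  have : ∀ x, Topel r * (f x • Eg x) = f x • Eg (notc x) := by
    intro x; rw [mul_smul_comm, Topel_mul_Eg]; rfl
  rw [Finset.sum_congr rfl (fun x _ => this x), Phi]
  exact Fintype.sum_equiv notPerm _ _
    (fun x => by simp [notPerm, Function.Involutive.toPerm, notc_notc])

lemma Phi_add (f g) : Phi r (f + g) = Phi r f + Phi r g := by
  simp [Phi, add_smul, Finset.sum_add_distrib]

lemma Phi_smul (c : ℂ) (f) : Phi r (c • f) = c • Phi r f := by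
  simp [Phi, Finset.smul_sum, smul_smul]

lemma Phi_sub (f g) : Phi r (f - g) = Phi r f - Phi r g := by
  simp [Phi, sub_smul, Finset.sum_sub_distrib]


-- CHUNK 5
def wv (r : ℕ) (s : Fin (2*r) → Bool) : (Fin (2*r) → Bool) → ℂ :=
  fun x => ∏ i : Fin (2*r), (if x i && s i then (-1:ℂ) else 1)

def chi (r : ℕ) (s : Fin (2*r) → Bool) : ℂ :=
  ∏ i : Fin (2*r), (if s i then (-1:ℂ) else 1)

def ev (r : ℕ) (s : Fin (2*r) → Bool) : ℂ :=
  ∑ i : Fin (2*r), (if s i then (-1:ℂ) else 1)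

def cardS (r : ℕ) (s : Fin (2*r) → Bool) : ℕ :=
  (Finset.univ.filter (fun i => s i = true)).card

lemma chi_eq (s) : chi r s = (-1:ℂ)^(cardS r s) := by
  rw [chi, Finset.prod_ite, Finset.prod_const, Finset.prod_const, one_pow, mul_one, cardS]

lemma chi_pm (s) : chi r s = 1 ∨ chi r s = -1 := by
  rw [chi_eq]
  rcases Nat.even_or_odd (cardS r s) with h | h
  · exact Or.inl h.neg_one_pow
  · exact Or.inr h.neg_one_pow

lemma cardS_le (s) : cardS r s ≤ 2*r := by
  rw [cardS]
  exact le_trans (Finset.card_filter_le _ _) (by simp)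

lemma ev_eq (s) : ev r s = (2*(r:ℂ)) - 2*(cardS r s : ℂ) := by
  classical
  rw [ev, Finset.sum_ite, Finset.sum_const, Finset.sum_const, cardS]
  have h := Finset.card_filter_add_card_filter_not
    (s := (Finset.univ : Finset (Fin (2*r)))) (p := fun i => s i = true)
  simp only [Finset.card_univ, Fintype.card_fin] at h
  have hb : (Finset.univ.filter (fun i => ¬ (s i = true))).card
      = 2*r - (Finset.univ.filter (fun i => s i = true)).card := by omega
  rw [hb]
  simp only [nsmul_eq_mul, mul_one, mul_neg]
  rw [Nat.cast_sub (by omega : (Finset.univ.filter (fun i => s i = true)).card ≤ 2*r)]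
  push_cast
  ring

lemma wv_flip (s i x) : wv r s (flip1 i x) = (if s i then (-1:ℂ) else 1) * wv r s x := by
  rw [wv, wv, ← Finset.prod_erase_mul Finset.univ _ (Finset.mem_univ i),
    ← Finset.prod_erase_mul Finset.univ _ (Finset.mem_univ i)]
  have h1 : ∀ j ∈ Finset.univ.erase i,
      (if flip1 i x j && s j then (-1:ℂ) else 1) = (if x j && s j then (-1:ℂ) else 1) := by
    intro j hj
    rw [flip1_apply, if_neg (Finset.mem_erase.mp hj).1]
  rw [Finset.prod_congr rfl h1]
  have h2 : (if flip1 i x i && s i then (-1:ℂ) else 1)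
      = (if s i then (-1:ℂ) else 1) * (if x i && s i then (-1:ℂ) else 1) := by
    rw [flip1_apply, if_pos rfl]
    cases hx : x i <;> cases hs : s i <;> norm_num
  rw [h2]; ring

lemma Aop_wv (s) : Aop r (wv r s) = ev r s • wv r s := by
  funext x
  rw [Aop, Pi.smul_apply, smul_eq_mul, ev, Finset.sum_mul]
  exact Finset.sum_congr rfl (fun i _ => wv_flip s i x)

lemma sum_wv : ∑ s : Fin (2*r) → Bool, wv r s = (2^(2*r) : ℂ) • δv r (fun _ => false) := by
  funext x
  rw [Finset.sum_apply, Pi.smul_apply, δv]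
  have key : ∑ s : Fin (2*r) → Bool, wv r s x
      = ∏ i : Fin (2*r), (∑ b : Bool, if x i && b then (-1:ℂ) else 1) := by
    rw [Finset.prod_univ_sum]
    rw [← Fintype.piFinset_univ]
    rfl
  rw [key]
  by_cases hx : x = fun _ => false
  · subst hx
    simp [Fintype.sum_bool]
  · have : ∃ i, x i = true := by
      by_contra h
      push_neg at h
      exact hx (funext fun i => by simpa using h i)
    obtain ⟨i, hi⟩ := this
    rw [Finset.prod_eq_zero (Finset.mem_univ i) (by simp [hi, Fintype.sum_bool]),
      if_neg (by intro h; rw [h] at hi; simp at hi)]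
    simp

lemma sum_chi_wv : ∑ s : Fin (2*r) → Bool, chi r s • wv r s
    = (2^(2*r) : ℂ) • δv r (fun _ => true) := by
  funext x
  rw [Finset.sum_apply, Pi.smul_apply, δv]
  have h1 : ∀ s, (chi r s • wv r s) x
      = ∏ i : Fin (2*r), ((if s i then (-1:ℂ) else 1) * (if x i && s i then (-1:ℂ) else 1)) := by
    intro s
    rw [Pi.smul_apply, smul_eq_mul, chi, wv, ← Finset.prod_mul_distrib]
  rw [Finset.sum_congr rfl (fun s _ => h1 s)]
  have key : ∑ s : Fin (2*r) → Bool,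
      ∏ i : Fin (2*r), ((if s i then (-1:ℂ) else 1) * (if x i && s i then (-1:ℂ) else 1))
      = ∏ i : Fin (2*r), (∑ b : Bool, ((if b then (-1:ℂ) else 1) * (if x i && b then (-1:ℂ) else 1))) := by
    rw [Finset.prod_univ_sum]
    rw [← Fintype.piFinset_univ]
  rw [key]
  by_cases hx : x = fun _ => true
  · subst hx
    simp [Fintype.sum_bool]
    norm_num
  · have : ∃ i, x i = false := by
      by_contra h
      push_neg at h
      exact hx (funext fun i => by simpa using h i)
    obtain ⟨i, hi⟩ := this
    rw [Finset.prod_eq_zero (Finset.mem_univ i) (by simp [hi, Fintype.sum_bool]),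
      if_neg (by intro h; rw [h] at hi; simp at hi)]
    simp


-- CHUNK 5b : step operator and iterated application
def stepf (r : ℕ) (d : ℂ) (f : (Fin (2*r) → Bool) → ℂ) : (Fin (2*r) → Bool) → ℂ :=
  fun x => Aop r (Aop r f) x - d * f x

def applyL (r : ℕ) (ds : List ℂ) (f : (Fin (2*r) → Bool) → ℂ) : (Fin (2*r) → Bool) → ℂ :=
  ds.foldr (stepf r) f

lemma Aop_sum {α : Type*} (t : Finset α) (g : α → (Fin (2*r) → Bool) → ℂ) :
    Aop r (∑ a ∈ t, g a) = ∑ a ∈ t, Aop r (g a) := by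
  funext x
  simp only [Aop, Finset.sum_apply]
  exact Finset.sum_comm

lemma Aop_smul (c : ℂ) (f) : Aop r (c • f) = c • Aop r f := by
  funext x
  simp [Aop, Finset.mul_sum]

lemma stepf_sum {α : Type*} (d : ℂ) (t : Finset α) (g : α → (Fin (2*r) → Bool) → ℂ) :
    stepf r d (∑ a ∈ t, g a) = ∑ a ∈ t, stepf r d (g a) := by
  funext x
  rw [stepf, Aop_sum, Aop_sum]
  simp [stepf, Finset.sum_apply, Finset.sum_sub_distrib, Finset.mul_sum]

lemma stepf_smul (d c : ℂ) (f) : stepf r d (c • f) = c • stepf r d f := by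
  funext x
  rw [stepf, Aop_smul, Aop_smul]
  simp [stepf]
  ring

lemma applyL_sum {α : Type*} (ds : List ℂ) (t : Finset α) (g : α → (Fin (2*r) → Bool) → ℂ) :
    applyL r ds (∑ a ∈ t, g a) = ∑ a ∈ t, applyL r ds (g a) := by
  induction ds with
  | nil => rfl
  | cons d ds ih =>
    rw [applyL, List.foldr_cons, ← applyL, ih, stepf_sum]
    rfl

lemma applyL_smul (ds : List ℂ) (c : ℂ) (f) :
    applyL r ds (c • f) = c • applyL r ds f := by
  induction ds with
  | nil => rfl
  | cons d ds ih =>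
    rw [applyL, List.foldr_cons, ← applyL, ih, stepf_smul]
    rfl

lemma applyL_wv (ds : List ℂ) (s) :
    applyL r ds (wv r s) = (ds.map (fun d => ev r s * ev r s - d)).prod • wv r s := by
  induction ds with
  | nil => simp [applyL]
  | cons d ds ih =>
    rw [applyL, List.foldr_cons, ← applyL, ih, stepf_smul]
    have hstep : stepf r d (wv r s) = (ev r s * ev r s - d) • wv r s := by
      funext x
      rw [stepf, Aop_wv, Aop_smul, Aop_wv]
      simp
      ring
    rw [hstep, smul_smul, List.map_cons, List.prod_cons,
      mul_comm ((List.map (fun d => ev r s * ev r s - d) ds).prod) (ev r s * ev r s - d)]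

lemma applyL_kill (ds : List ℂ) (σ : ℂ) (hσ : σ = 1 ∨ σ = -1)
    (hkill : ∀ s : Fin (2*r) → Bool, chi r s = -σ →
      (ds.map (fun d => ev r s * ev r s - d)).prod = 0) :
    applyL r ds (δv r (fun _ => true) - σ • δv r (fun _ => false)) = 0 := by
  have hdecomp : (2^(2*r) : ℂ) • (δv r (fun _ => true) - σ • δv r (fun _ => false))
      = ∑ s : Fin (2*r) → Bool, (chi r s - σ) • wv r s := by
    have : ∀ s : Fin (2*r) → Bool, (chi r s - σ) • wv r s
        = chi r s • wv r s - σ • wv r s := by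
      intro s; rw [sub_smul]
    rw [Finset.sum_congr rfl (fun s _ => this s), Finset.sum_sub_distrib,
      sum_chi_wv, ← Finset.smul_sum, sum_wv, smul_comm σ, smul_sub]
  have h2 : (2^(2*r) : ℂ) • applyL r ds (δv r (fun _ => true) - σ • δv r (fun _ => false))
      = 0 := by
    rw [← applyL_smul, hdecomp, applyL_sum]
    apply Finset.sum_eq_zero
    intro s _
    rw [applyL_smul, applyL_wv]
    by_cases hs : chi r s = -σ
    · rw [hkill s hs, zero_smul, smul_zero]
    · have : chi r s - σ = 0 ∨ chi r s = -σ := by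
        rcases chi_pm (r:=r) s with h | h <;> rcases hσ with h' | h'
        · exact Or.inl (by simp [h, h'])
        · exact Or.inr (by simp [h, h'])
        · exact Or.inr (by simp [h, h'])
        · exact Or.inl (by simp [h, h'])
      rcases this with h | h
      · rw [h, zero_smul]
      · exact absurd h hs
  have h2r : (2^(2*r) : ℂ) ≠ 0 := pow_ne_zero _ (by norm_num)
  exact smul_eq_zero.mp h2 |>.resolve_left h2r


-- CHUNK 6a : Γbr 2 and Ik 2
lemma perm_fin2_univ : (Finset.univ : Finset (Equiv.Perm (Fin 2)))
    = {1, Equiv.swap 0 1} := by decide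

lemma Γbr_two (p : Fin 2 → Fin (2*r)) :
    Γbr r 2 p = if p 0 = p 1 then 0 else Γgen r (p 0) * Γgen r (p 1) := by
  rw [Γbr, perm_fin2_univ]
  rw [Finset.sum_insert (by decide), Finset.sum_singleton]
  have h1 : ∀ σ : Equiv.Perm (Fin 2),
      (List.ofFn fun j => Γgen r (p (σ j))).prod = Γgen r (p (σ 0)) * Γgen r (p (σ 1)) := by
    intro σ
    simp [List.ofFn_succ]
  rw [h1, h1]
  have hs1 : ((Equiv.Perm.sign (1 : Equiv.Perm (Fin 2)) : ℤ) : ℂ) = 1 := by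
    rw [map_one]; norm_num
  have hs2 : ((Equiv.Perm.sign (Equiv.swap (0:Fin 2) 1) : ℤ) : ℂ) = -1 := by
    rw [Equiv.Perm.sign_swap (by decide)]; norm_num
  have hswap0 : Equiv.swap (0:Fin 2) 1 0 = 1 := by decide
  have hswap1 : Equiv.swap (0:Fin 2) 1 1 = 0 := by decide
  rw [hs1, hs2, hswap0, hswap1]
  simp only [Equiv.Perm.one_apply, one_smul, neg_smul, Nat.factorial]
  by_cases h : p 0 = p 1
  · rw [if_pos h, h]
    simp
  · rw [if_neg h, gamma_anticomm (Ne.symm h)]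
    norm_num
    rw [← add_smul]
    norm_num

lemma Ik_two : Ik r 2 = Fop r * Fop r - ((2*r : ℕ) : ℂ) • 1 := by
  have hF : Fop r * Fop r = ∑ i : Fin (2*r), ∑ j : Fin (2*r),
      (Γgen r i * Γgen r j) ⊗ₜ[ℂ] (Γgen r i * Γgen r j) := by
    rw [Fop, Finset.sum_mul_sum]
    exact Finset.sum_congr rfl (fun i _ => Finset.sum_congr rfl (fun j _ => by
      rw [Algebra.TensorProduct.tmul_mul_tmul]))
  have hIk : Ik r 2 = ∑ i : Fin (2*r), ∑ j : Fin (2*r),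
      ((if i = j then 0 else Γgen r i * Γgen r j) ⊗ₜ[ℂ]
       (if i = j then 0 else Γgen r i * Γgen r j)) := by
    rw [Ik, ← Fintype.sum_prod_type']
    refine Fintype.sum_equiv (piFinTwoEquiv (fun _ => Fin (2*r))) _ _ (fun p => ?_)
    rw [Γbr_two]
    rfl
  have key : ∀ i j : Fin (2*r),
      (Γgen r i * Γgen r j) ⊗ₜ[ℂ] (Γgen r i * Γgen r j)
      = (if i = j then 0 else Γgen r i * Γgen r j) ⊗ₜ[ℂ]
        (if i = j then 0 else Γgen r i * Γgen r j)
        + (if i = j then 1 else 0) := by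
    intro i j
    by_cases h : i = j
    · subst h
      rw [if_pos rfl, if_pos rfl, gamma_sq]
      simp [Algebra.TensorProduct.one_def]
    · rw [if_neg h, if_neg h, add_zero]
  rw [hF, hIk]
  have : ∑ i : Fin (2*r), ∑ j : Fin (2*r),
      ((Γgen r i * Γgen r j) ⊗ₜ[ℂ] (Γgen r i * Γgen r j))
      = (∑ i : Fin (2*r), ∑ j : Fin (2*r),
        ((if i = j then 0 else Γgen r i * Γgen r j) ⊗ₜ[ℂ]
         (if i = j then 0 else Γgen r i * Γgen r j)))
        + ∑ i : Fin (2*r), ∑ j : Fin (2*r), (if i = j then (1 : Cl r ⊗[ℂ] Cl r) else 0) := by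
    rw [← Finset.sum_add_distrib]
    refine Finset.sum_congr rfl (fun i _ => ?_)
    rw [← Finset.sum_add_distrib]
    exact Finset.sum_congr rfl (fun j _ => key i j)
  rw [this]
  have hdiag : ∑ i : Fin (2*r), ∑ j : Fin (2*r), (if i = j then (1 : Cl r ⊗[ℂ] Cl r) else 0)
      = ((2*r : ℕ) : ℂ) • 1 := by
    have : ∀ i : Fin (2*r), ∑ j : Fin (2*r), (if i = j then (1 : Cl r ⊗[ℂ] Cl r) else 0) = 1 := by
      intro i
      rw [Finset.sum_ite_eq Finset.univ i (fun _ => (1 : Cl r ⊗[ℂ] Cl r))]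
      simp
    rw [Finset.sum_congr rfl (fun i _ => this i), Finset.sum_const, Finset.card_univ,
      Fintype.card_fin, ← Nat.cast_smul_eq_nsmul ℂ]
  rw [hdiag]
  abel

lemma factor_eq (hr : 2 ≤ r) (k : ℕ) :
    sC r - cEv r k • 1
      = (-(16*(2*(r:ℂ)-2))⁻¹) • (Fop r * Fop r - ((2*(r:ℂ)-2*(k:ℂ))^2) • 1) := by
  have hr1 : (r:ℂ) - 1 ≠ 0 := by
    intro h
    have : (r:ℂ) = 1 := by linear_combination h
    rw [Nat.cast_eq_one] at this
    omega
  have h32 : (2*(r:ℂ)-2) ≠ 0 := by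
    intro h
    exact hr1 (by linear_combination h/2)
  rw [sC, Ik_two, cEv]
  push_cast
  match_scalars
  · ring
  · field_simp
    ring

-- CHUNK 7
lemma prod_map_smul {A : Type*} [Ring A] [Algebra ℂ A] (β : ℂ) {α : Type*}
    (h : α → A) (l : List α) :
    (l.map (fun a => β • h a)).prod = β ^ l.length • (l.map h).prod := by
  induction l with
  | nil => simp
  | cons a l ih =>
    rw [List.map_cons, List.prod_cons, ih, List.map_cons, List.prod_cons,
      smul_mul_assoc, mul_smul_comm, smul_smul, List.length_cons, pow_succ,
      mul_comm (β ^ l.length) β]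

lemma stepf_eq (d : ℂ) (f : (Fin (2*r) → Bool) → ℂ) :
    stepf r d f = Aop r (Aop r f) - d • f := rfl

lemma single_factor_mul_Phi (d : ℂ) (f) :
    (Fop r * Fop r - d • 1) * Phi r f = Phi r (stepf r d f) := by
  rw [sub_mul, smul_mul_assoc, one_mul, mul_assoc, Fop_mul_Phi, Fop_mul_Phi,
    stepf_eq, Phi_sub, Phi_smul]

lemma prodF_mul_Phi (ds : List ℂ) (f) :
    ((ds.map (fun d => Fop r * Fop r - d • 1)).prod) * Phi r f
      = Phi r (applyL r ds f) := by
  induction ds with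
  | nil => rw [List.map_nil, List.prod_nil, one_mul]; rfl
  | cons d ds ih =>
    rw [List.map_cons, List.prod_cons, mul_assoc, ih, single_factor_mul_Phi]
    rfl

lemma Aop_sub (f g) : Aop r (f - g) = Aop r f - Aop r g := by
  funext x
  simp [Aop, Finset.sum_sub_distrib]

lemma stepf_sub (d : ℂ) (f g) : stepf r d (f - g) = stepf r d f - stepf r d g := by
  funext x
  rw [stepf, Aop_sub, Aop_sub]
  simp [stepf]
  ring

lemma applyL_sub (ds : List ℂ) (f g) :
    applyL r ds (f - g) = applyL r ds f - applyL r ds g := by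
  induction ds with
  | nil => rfl
  | cons d ds ih =>
    rw [applyL, List.foldr_cons, ← applyL, ih, stepf_sub]
    rfl

lemma flip1_notc (i : Fin (2*r)) (x) : notc (flip1 i x) = flip1 i (notc x) := by
  funext j
  by_cases h : j = i <;> simp [notc, flip1_apply, h]

lemma Aop_notc (f) : Aop r (fun x => f (notc x)) = fun x => Aop r f (notc x) := by
  funext x
  rw [Aop, Aop]
  exact Finset.sum_congr rfl (fun i _ => by rw [← flip1_notc])

lemma stepf_notc (d : ℂ) (f) :
    stepf r d (fun x => f (notc x)) = fun x => stepf r d f (notc x) := by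
  funext x
  rw [stepf, Aop_notc, Aop_notc]
  simp [stepf]

lemma applyL_notc (ds : List ℂ) (f) :
    applyL r ds (fun x => f (notc x)) = fun x => applyL r ds f (notc x) := by
  induction ds with
  | nil => rfl
  | cons d ds ih =>
    rw [applyL, List.foldr_cons, ← applyL, ih, stepf_notc]
    rfl

lemma notc_eq_bot_iff (x : Fin (2*r) → Bool) :
    (notc x = fun _ => false) ↔ x = fun _ => true := by
  constructor
  · intro h
    funext j
    have := congrFun h j
    simp [notc] at this
    exact this
  · intro h
    subst h
    funext j
    simp [notc]

lemma δbot_notc : (fun x => δv r (fun _ => false) (notc x)) = δv r (fun _ => true) := by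
  funext x
  simp only [δv]
  by_cases hx : x = fun _ => true
  · rw [if_pos ((notc_eq_bot_iff x).mpr hx), if_pos hx]
  · rw [if_neg (fun h => hx ((notc_eq_bot_iff x).mp h)), if_neg hx]

lemma γb_top_eq : γb (fun _ : Fin (2*r) => true)
    = ((List.finRange (2*r)).map (Γgen r)).prod := by
  simp [γb, γl]

lemma γb_top_sq (hre : Even r) :
    γb (fun _ : Fin (2*r) => true) * γb (fun _ : Fin (2*r) => true) = 1 := by
  rw [γb_top_eq, prod_gamma_sq _ (List.nodup_finRange _)]
  have hlen : (List.finRange (2*r)).length = 2*r := List.length_finRange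
  rw [hlen]
  have hexp : 2*r*(2*r-1)/2 = r*(2*r-1) := by
    rw [mul_assoc]
    exact Nat.mul_div_cancel_left _ (by norm_num)
  rw [hexp, (hre.mul_right (2*r-1)).neg_one_pow, one_smul]

lemma Γtop_eq : Γtop r = ((-Complex.I)^r) • γb (fun _ : Fin (2*r) => true) := by
  rw [Γtop, γb_top_eq, List.ofFn_eq_map]

lemma mu_sq (hre : Even r) : ((-Complex.I)^r) * ((-Complex.I)^r) = 1 := by
  rw [← pow_add, ← two_mul, pow_mul]
  have h2 : (-Complex.I)^2 = -1 := by rw [neg_sq, Complex.I_sq]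
  rw [h2]
  exact hre.neg_one_pow

lemma pCh_mul_γtop (hre : Even r) {ε : ℂ} (hε : ε = 1 ∨ ε = -1) :
    pCh r ε * γb (fun _ : Fin (2*r) => true)
      = (ε * (-Complex.I)^r) • pCh r ε := by
  have hμ2 : ((-Complex.I)^r) * ((-Complex.I)^r) = 1 := mu_sq hre
  have hε2 : ε * ε = 1 := by rcases hε with h | h <;> rw [h] <;> norm_num
  rw [pCh, Γtop_eq, smul_mul_assoc, add_mul, one_mul, smul_mul_assoc,
    smul_mul_assoc, γb_top_sq hre]
  rcases mul_self_eq_one_iff.mp hμ2 with h | h <;> rcases hε with h' | h' <;>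
    rw [h, h'] <;> match_scalars <;> norm_num

lemma ppCh_mul_Topel (hre : Even r) {ε ε' : ℂ}
    (hε : ε = 1 ∨ ε = -1) (hε' : ε' = 1 ∨ ε' = -1) :
    ppCh r ε ε' * Topel r = (ε * ε') • ppCh r ε ε' := by
  rw [ppCh, Topel, Algebra.TensorProduct.tmul_mul_tmul, pCh_mul_γtop hre hε,
    pCh_mul_γtop hre hε', TensorProduct.smul_tmul_smul]
  have h : (ε * (-Complex.I)^r) * (ε' * (-Complex.I)^r) = ε * ε' := by
    have hμ2 := mu_sq (r:=r) hre
    linear_combination (ε*ε') * hμ2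
  rw [h]

lemma key (hr : 2 ≤ r) (hre : Even r) (ε ε' σ : ℂ)
    (hε : ε = 1 ∨ ε = -1) (hε' : ε' = 1 ∨ ε' = -1) (hσ : σ = 1 ∨ σ = -1)
    (hσε : σ * (ε * ε') = -1) (ks : List ℕ)
    (hkill : ∀ s : Fin (2*r) → Bool, chi r s = -σ →
      ((ks.map (fun k : ℕ => (2*(r:ℂ)-2*(k:ℂ))^2)).map
        (fun d => ev r s * ev r s - d)).prod = 0) :
    ppCh r ε ε' * (ks.map (fun k : ℕ => sC r - cEv r k • 1)).prod = 0 := by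
  set ds : List ℂ := ks.map (fun k : ℕ => (2*(r:ℂ)-2*(k:ℂ))^2) with hds
  have hmap : ks.map (fun k : ℕ => sC r - cEv r k • 1)
      = ks.map (fun k : ℕ => (-(16*(2*(r:ℂ)-2))⁻¹) •
          (Fop r * Fop r - ((2*(r:ℂ)-2*(k:ℂ))^2) • 1)) :=
    List.map_congr_left (fun k _ => factor_eq hr k)
  have hmap2 : ks.map (fun k : ℕ => Fop r * Fop r - ((2*(r:ℂ)-2*(k:ℂ))^2) • 1)
      = ds.map (fun d => Fop r * Fop r - d • 1) := by
    rw [hds, List.map_map]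
    rfl
  rw [hmap, prod_map_smul, hmap2]
  set q := applyL r ds (δv r (fun _ => false)) with hq
  have hPq : (ds.map (fun d => Fop r * Fop r - d • 1)).prod = Phi r q := by
    have h := prodF_mul_Phi (r:=r) ds (δv r (fun _ => false))
    rw [Phi_bot, mul_one] at h
    exact h
  have hTq : Topel r * Phi r q = σ • Phi r q := by
    rw [Topel_mul_Phi]
    have h1 : (fun x => q (notc x)) = applyL r ds (δv r (fun _ => true)) := by
      rw [hq, ← applyL_notc, δbot_notc]
    have h2 : applyL r ds (δv r (fun _ => true)) - σ • q = 0 := by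
      rw [hq, ← applyL_smul, ← applyL_sub]
      exact applyL_kill ds σ hσ hkill
    have h3 : (fun x => q (notc x)) = σ • q := by
      rw [h1]
      have := sub_eq_zero.mp h2
      rw [this]
    rw [h3, Phi_smul]
  -- final sign argument
  have hσ2 : σ * σ = 1 := by rcases hσ with h | h <;> rw [h] <;> norm_num
  set X := ppCh r ε ε' * Phi r q with hX
  have h1 : Phi r q = σ • (Topel r * Phi r q) := by
    rw [hTq, smul_smul, hσ2, one_smul]
  have hstep : X = (σ * (ε * ε')) • X := by
    calc X = ppCh r ε ε' * Phi r q := hX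
    _ = ppCh r ε ε' * (σ • (Topel r * Phi r q)) := by rw [← h1]
    _ = σ • (ppCh r ε ε' * Topel r * Phi r q) := by
          rw [mul_smul_comm, mul_assoc]
    _ = σ • ((ε * ε') • ppCh r ε ε' * Phi r q) := by rw [ppCh_mul_Topel hre hε hε']
    _ = (σ * (ε * ε')) • X := by
          rw [smul_mul_assoc, smul_smul, hX]
  rw [hσε] at hstep
  have hXzero : X = 0 := by
    have h2X : (2:ℂ) • X = 0 := by
      rw [two_smul]
      nth_rewrite 1 [hstep]
      rw [neg_one_smul, neg_add_cancel]
    exact (smul_eq_zero.mp h2X).resolve_left (by norm_num)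
  rw [hPq, mul_smul_comm, ← hX, hXzero, smul_zero]

lemma chi_odd {s : Fin (2*r) → Bool} (hs : chi r s = -1) : ¬ Even (cardS r s) := by
  intro h
  rw [chi_eq, h.neg_one_pow] at hs
  norm_num at hs

lemma chi_even {s : Fin (2*r) → Bool} (hs : chi r s = 1) : Even (cardS r s) := by
  by_contra h
  rw [chi_eq, ((Nat.not_even_iff_odd).mp h).neg_one_pow] at hs
  norm_num at hs

lemma kill_odd (hr : 2 ≤ r) (hre : Even r) (s : Fin (2*r) → Bool) (hs : chi r s = -1) :
    ((((List.range (r/2)).map (fun m => 2*m+1)).map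
        (fun k : ℕ => (2*(r:ℂ)-2*(k:ℂ))^2)).map
      (fun d => ev r s * ev r s - d)).prod = 0 := by
  rw [List.map_map, List.map_map]
  set c := cardS r s with hc
  have hcle : c ≤ 2*r := cardS_le s
  have hodd : ¬ Even c := chi_odd hs
  have hrr : r % 2 = 0 := Nat.even_iff.mp hre
  have hco : c % 2 = 1 := Nat.odd_iff.mp (Nat.not_even_iff_odd.mp hodd)
  obtain ⟨j, hj⟩ : ∃ j, c = 2*j+1 := ⟨c/2, by omega⟩
  apply List.prod_eq_zero
  by_cases hcase : j < r/2
  · refine List.mem_map.mpr ⟨j, List.mem_range.mpr hcase, ?_⟩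
    simp only [Function.comp_apply]
    rw [ev_eq, ← hc]
    push_cast [hj]
    ring
  · refine List.mem_map.mpr ⟨r - 1 - j, List.mem_range.mpr (by omega), ?_⟩
    simp only [Function.comp_apply]
    rw [ev_eq, ← hc]
    have h1 : (2*(r-1-j)+1 : ℕ) = 2*r - c := by omega
    rw [h1, Nat.cast_sub hcle]
    push_cast
    ring

lemma kill_even (hr : 2 ≤ r) (hre : Even r) (s : Fin (2*r) → Bool) (hs : chi r s = 1) :
    ((((List.range (r/2+1)).map (fun m => 2*m)).map
        (fun k : ℕ => (2*(r:ℂ)-2*(k:ℂ))^2)).map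
      (fun d => ev r s * ev r s - d)).prod = 0 := by
  rw [List.map_map, List.map_map]
  set c := cardS r s with hc
  have hcle : c ≤ 2*r := cardS_le s
  have heven : Even c := chi_even hs
  have hrr : r % 2 = 0 := Nat.even_iff.mp hre
  have hco : c % 2 = 0 := Nat.even_iff.mp heven
  obtain ⟨j, hj⟩ : ∃ j, c = 2*j := ⟨c/2, by omega⟩
  apply List.prod_eq_zero
  by_cases hcase : j < r/2+1
  · refine List.mem_map.mpr ⟨j, List.mem_range.mpr hcase, ?_⟩
    simp only [Function.comp_apply]
    rw [ev_eq, ← hc]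
    push_cast [hj]
    ring
  · refine List.mem_map.mpr ⟨r - j, List.mem_range.mpr (by omega), ?_⟩
    simp only [Function.comp_apply]
    rw [ev_eq, ← hc]
    have h1 : (2*(r-j) : ℕ) = 2*r - c := by omega
    rw [h1, Nat.cast_sub hcle]
    push_cast
    ring

end Aux

/-- for even `r`,
`p_{ε,−ε}·Π_{m=1}^{r/2} (Ĉ − c_{2m−1}·1) = 0` and
`p_{εε}·Π_{m=0}^{r/2} (Ĉ − c_{2m}·1) = 0`. -/
theorem sC_char_idens_even_r (r : ℕ) (hr : 2 ≤ r) (hre : Even r)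
    (ε : ℂ) (hε : ε = 1 ∨ ε = -1) :
    ppCh r ε (-ε) * ((List.range (r/2)).map (fun m => sC r - cEv r (2*m+1) • 1)).prod = 0 ∧
    ppCh r ε ε * ((List.range (r/2+1)).map (fun m => sC r - cEv r (2*m) • 1)).prod = 0 := by
  have hε2 : ε * ε = 1 := by rcases hε with h | h <;> rw [h] <;> norm_num
  constructor
  · have hlist : (List.range (r/2)).map (fun m => sC r - cEv r (2*m+1) • 1)
        = ((List.range (r/2)).map (fun m => 2*m+1)).map
            (fun k : ℕ => sC r - cEv r k • 1) := by
      rw [List.map_map]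
      rfl
    rw [hlist]
    refine Aux.key hr hre ε (-ε) 1 hε ?_ (Or.inl rfl) (by rw [one_mul]; linear_combination -hε2)
      _ (fun s hs => ?_)
    · rcases hε with h | h <;> simp [h]
    · exact Aux.kill_odd hr hre s (by rw [hs])
  · have hlist : (List.range (r/2+1)).map (fun m => sC r - cEv r (2*m) • 1)
        = ((List.range (r/2+1)).map (fun m => 2*m)).map
            (fun k : ℕ => sC r - cEv r k • 1) := by
      rw [List.map_map]
      rfl
    rw [hlist]
    refine Aux.key hr hre ε ε (-1) hε hε (Or.inr rfl) (by rw [hε2]; norm_num)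
      _ (fun s hs => ?_)
    exact Aux.kill_even hr hre s (by rw [hs]; norm_num)

end
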